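/- Let γ ∈ (0,1), ε > 0, K ≥ 1. Suppose for each i = 1,…,K the sequences n_{i,t} → n_{i,∞} ≥ 0 (real) and ℓ_{i,t} → ℓ_{i,∞} (in ℝ^d), with Σ_{i=1}^K n_{i,∞} > 0. Define N_{i,0} = 0, m_{i,0} = c_0, N_{i,t+1} = γ N_{i,t} + (1-γ) n_{i,t} + ε, m_{i,t+1} = γ m_{i,t} + (1-γ) ℓ_{i,t}, and c_{i,t+1} = (m_{i,t+1} / (γ N_{i,t} + (1-γ) n_{i,t} + ε)) · ((Σ_j (γ N_{j,t} + (1-γ) n_{j,t}) + K ε) / (Σ_j (γ N_{j,t} + (1-γ) n_{j,t}))), assuming the last denominator is eventually positive. Then c_{i,t} converges, with limit c_{i,∞} = (ℓ_{i,∞} / (n_{i,∞} + γε/(1-γ) + ε)) · (Σ_j (n_{j,∞} + γε/(1-γ) + ε)) / (Σ_j (n_{j,∞} + γε/(1-γ))). -/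

import Mathlib

open Filter

private lemma contraction_aux (γ : ℝ) (hγ0 : 0 ≤ γ) (hγ1 : γ < 1) (u δ : ℕ → ℝ)
    (hu : ∀ t, 0 ≤ u t) (hrec : ∀ t, u (t + 1) ≤ γ * u t + δ t)
    (hδ : Tendsto δ atTop (nhds 0)) : Tendsto u atTop (nhds 0) := by
  rw [Metric.tendsto_atTop]
  intro ε hε
  have h1γ : (0:ℝ) < 1 - γ := by linarith
  obtain ⟨T, hT⟩ := (Metric.tendsto_atTop.1 hδ) ((1 - γ) * ε / 4) (by positivity)
  have key : ∀ s, u (T + s) ≤ γ ^ s * u T + ε / 4 := by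
    intro s
    induction s with
    | zero => simp; linarith [hε]
    | succ s ih =>
      have hδT := hT (T + s) (by omega)
      rw [Real.dist_eq, sub_zero] at hδT
      have hδle : δ (T + s) ≤ (1 - γ) * ε / 4 := (abs_lt.1 hδT).2.le
      have h1 : u (T + s + 1) ≤ γ * u (T + s) + δ (T + s) := hrec _
      have h2 : γ * u (T + s) ≤ γ * (γ ^ s * u T + ε / 4) :=
        mul_le_mul_of_nonneg_left ih hγ0
      have : u (T + (s + 1)) = u (T + s + 1) := by ring_nf
      rw [this]
      have hpow : γ * (γ ^ s * u T) = γ ^ (s + 1) * u T := by ring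
      nlinarith
  have hpow : Tendsto (fun s => γ ^ s * u T) atTop (nhds 0) := by
    simpa using (tendsto_pow_atTop_nhds_zero_of_lt_one hγ0 hγ1).mul_const (u T)
  obtain ⟨S, hS⟩ := (Metric.tendsto_atTop.1 hpow) (ε / 4) (by positivity)
  refine ⟨T + S, fun t ht => ?_⟩
  have hkey : u t ≤ γ ^ (t - T) * u T + ε / 4 := by
    have := key (t - T)
    rwa [Nat.add_sub_cancel' (by omega)] at this
  have h2 := hS (t - T) (by omega)
  rw [Real.dist_eq, sub_zero] at h2
  have hp : γ ^ (t - T) * u T < ε / 4 := lt_of_abs_lt h2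
  rw [Real.dist_eq, sub_zero, abs_of_nonneg (hu t)]
  linarith

private lemma ema_tendsto {E : Type*} [NormedAddCommGroup E] [NormedSpace ℝ E]
    (γ : ℝ) (hγ0 : 0 ≤ γ) (hγ1 : γ < 1) (x y : ℕ → E) (L : E)
    (hrec : ∀ t, x (t + 1) = γ • x t + y t) (hy : Tendsto y atTop (nhds L)) :
    Tendsto x atTop (nhds ((1 - γ)⁻¹ • L)) := by
  set X := (1 - γ)⁻¹ • L with hX
  have h1γ : (0:ℝ) < 1 - γ := by linarith
  have hfix : γ • X + L = X := by
    have hc : γ * (1 - γ)⁻¹ + 1 = (1 - γ)⁻¹ := by field_simp; ring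
    calc γ • X + L = (γ * (1 - γ)⁻¹) • L + (1:ℝ) • L := by rw [hX, smul_smul, one_smul]
      _ = (γ * (1 - γ)⁻¹ + 1) • L := (add_smul _ _ _).symm
      _ = X := by rw [hc]
  have herr : Tendsto (fun t => x t - X) atTop (nhds 0) := by
    rw [tendsto_zero_iff_norm_tendsto_zero]
    apply contraction_aux γ hγ0 hγ1 _ (fun t => ‖y t - L‖) (fun t => norm_nonneg _)
    · intro t
      have : x (t + 1) - X = γ • (x t - X) + (y t - L) := by
        have : γ • (x t - X) + (y t - L) = (γ • x t + y t) - (γ • X + L) := by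
          rw [smul_sub]; abel
        rw [this, hrec t, hfix]
      rw [this]
      calc ‖γ • (x t - X) + (y t - L)‖ ≤ ‖γ • (x t - X)‖ + ‖y t - L‖ := norm_add_le _ _
        _ = γ * ‖x t - X‖ + ‖y t - L‖ := by rw [norm_smul, Real.norm_eq_abs, abs_of_nonneg hγ0]
    · rw [← tendsto_zero_iff_norm_tendsto_zero]
      simpa using hy.sub_const L
  simpa using herr.add_const X

/-- Convergence of the full EMA codebook update with Laplace smoothing
(Proposition 1 of the paper). -/
theorem ema_codebook_converges (d K : ℕ) (hK : 1 ≤ K) (γ ε : ℝ)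
    (hγ0 : 0 < γ) (hγ1 : γ < 1) (hε : 0 < ε)
    (n : Fin K → ℕ → ℝ) (nlim : Fin K → ℝ) (hnlim : ∀ i, 0 ≤ nlim i)
    (hn : ∀ i, Tendsto (n i) atTop (nhds (nlim i)))
    (ℓ : Fin K → ℕ → EuclideanSpace ℝ (Fin d)) (ℓlim : Fin K → EuclideanSpace ℝ (Fin d))
    (hℓ : ∀ i, Tendsto (ℓ i) atTop (nhds (ℓlim i)))
    (hsum : 0 < ∑ j, nlim j)
    (c₀ : EuclideanSpace ℝ (Fin d))
    (N : Fin K → ℕ → ℝ) (m : Fin K → ℕ → EuclideanSpace ℝ (Fin d))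
    (c : Fin K → ℕ → EuclideanSpace ℝ (Fin d))
    (hN0 : ∀ i, N i 0 = 0) (hm0 : ∀ i, m i 0 = c₀)
    (hNrec : ∀ i t, N i (t + 1) = γ * N i t + (1 - γ) * n i t + ε)
    (hmrec : ∀ i t, m i (t + 1) = γ • m i t + (1 - γ) • ℓ i t)
    (hden : ∀ᶠ t in atTop, 0 < ∑ j, (γ * N j t + (1 - γ) * n j t))
    (hcrec : ∀ i t, c i (t + 1) =
      ((1 / (γ * N i t + (1 - γ) * n i t + ε)) *
        ((∑ j, (γ * N j t + (1 - γ) * n j t) + K * ε) /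
          (∑ j, (γ * N j t + (1 - γ) * n j t)))) • m i (t + 1)) :
    ∀ i, Tendsto (c i) atTop (nhds
      (((1 / (nlim i + γ * ε / (1 - γ) + ε)) *
        ((∑ j, (nlim j + γ * ε / (1 - γ) + ε)) /
          (∑ j, (nlim j + γ * ε / (1 - γ))))) • ℓlim i)) := by
  have h1γ : (0:ℝ) < 1 - γ := by linarith
  -- N i t → nlim i + ε / (1 - γ)
  have hN : ∀ i, Tendsto (N i) atTop (nhds (nlim i + ε / (1 - γ))) := by
    intro i
    have := ema_tendsto (E := ℝ) γ hγ0.le hγ1 (N i) (fun t => (1 - γ) * n i t + ε)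
      ((1 - γ) * nlim i + ε)
      (fun t => by rw [hNrec i t]; simp [smul_eq_mul]; ring)
      (by simpa using ((hn i).const_mul (1 - γ)).add_const ε)
    have heq : (1 - γ)⁻¹ • ((1 - γ) * nlim i + ε) = nlim i + ε / (1 - γ) := by
      rw [smul_eq_mul]; field_simp
    rwa [heq] at this
  -- m i t → ℓlim i
  have hm : ∀ i, Tendsto (m i) atTop (nhds (ℓlim i)) := by
    intro i
    have := ema_tendsto γ hγ0.le hγ1 (m i) (fun t => (1 - γ) • ℓ i t) ((1 - γ) • ℓlim i)
      (hmrec i) (by exact (hℓ i).const_smul (1 - γ))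
    have heq : (1 - γ)⁻¹ • ((1 - γ) • ℓlim i) = ℓlim i := by
      rw [smul_smul, inv_mul_cancel₀ h1γ.ne', one_smul]
    rwa [heq] at this
  -- per-coordinate denominator limits
  have hA : ∀ i, Tendsto (fun t => γ * N i t + (1 - γ) * n i t + ε) atTop
      (nhds (nlim i + γ * ε / (1 - γ) + ε)) := by
    intro i
    have h := (((hN i).const_mul γ).add ((hn i).const_mul (1 - γ))).add_const ε
    have heq : γ * (nlim i + ε / (1 - γ)) + (1 - γ) * nlim i + ε
        = nlim i + γ * ε / (1 - γ) + ε := by field_simp; ring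
    rwa [heq] at h
  have hApos : ∀ i, 0 < nlim i + γ * ε / (1 - γ) + ε := by
    intro i
    have : 0 < γ * ε / (1 - γ) := by positivity
    have := hnlim i
    linarith
  -- sum limit
  have hSt : Tendsto (fun t => ∑ j, (γ * N j t + (1 - γ) * n j t)) atTop
      (nhds (∑ j, (nlim j + γ * ε / (1 - γ)))) := by
    apply tendsto_finset_sum
    intro j _
    have h := ((hN j).const_mul γ).add ((hn j).const_mul (1 - γ))
    have heq : γ * (nlim j + ε / (1 - γ)) + (1 - γ) * nlim j
        = nlim j + γ * ε / (1 - γ) := by field_simp; ring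
    rwa [heq] at h
  have hSpos : 0 < ∑ j, (nlim j + γ * ε / (1 - γ)) := by
    have h2 : ∑ j, nlim j ≤ ∑ j, (nlim j + γ * ε / (1 - γ)) := by
      apply Finset.sum_le_sum
      intro j _
      have : 0 < γ * ε / (1 - γ) := by positivity
      linarith
    linarith
  have hsumeq : ∑ j, (nlim j + γ * ε / (1 - γ) + ε)
      = (∑ j, (nlim j + γ * ε / (1 - γ))) + K * ε := by
    rw [Finset.sum_add_distrib, Finset.sum_const, Finset.card_univ, Fintype.card_fin,
      nsmul_eq_mul]
  intro i
  -- limit of the scalar factor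
  have hscal : Tendsto (fun t => (1 / (γ * N i t + (1 - γ) * n i t + ε)) *
      ((∑ j, (γ * N j t + (1 - γ) * n j t) + K * ε) /
        (∑ j, (γ * N j t + (1 - γ) * n j t)))) atTop
      (nhds ((1 / (nlim i + γ * ε / (1 - γ) + ε)) *
        ((∑ j, (nlim j + γ * ε / (1 - γ) + ε)) /
          (∑ j, (nlim j + γ * ε / (1 - γ)))))) := by
    rw [hsumeq]
    exact (tendsto_const_nhds.div (hA i) (hApos i).ne').mul
      ((hSt.add_const ((K : ℝ) * ε)).div hSt hSpos.ne')
  have hmshift : Tendsto (fun t => m i (t + 1)) atTop (nhds (ℓlim i)) :=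
    (hm i).comp (tendsto_add_atTop_nat 1)
  have hc1 : Tendsto (fun t => c i (t + 1)) atTop (nhds
      (((1 / (nlim i + γ * ε / (1 - γ) + ε)) *
        ((∑ j, (nlim j + γ * ε / (1 - γ) + ε)) /
          (∑ j, (nlim j + γ * ε / (1 - γ))))) • ℓlim i)) := by
    have := hscal.smul hmshift
    simpa only [← hcrec i] using this
  exact (tendsto_add_atTop_iff_nat 1).mp hc1
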